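/- For every positive integer L, the series G_{L,1}(q) := q/(q;q)_{L+1} − Σ_{n≥1} (q^{2n}/(1−q^n)) · C(L+n−1, n−1)_q has non-negative power series coefficients; equivalently, for every N ≥ 1, among partitions of N with largest minus smallest part at most L, those with smallest part 1 are at least as numerous as those with smallest part ≥ 2. -/

import Mathlib

open PowerSeries

/-- `(q^s; q)_n` as a formal power series in `q = X` over `ℚ`. -/
noncomputable def qp (s n : ℕ) : PowerSeries ℚ :=
  ∏ i ∈ Finset.range n, (1 - (X : PowerSeries ℚ) ^ (s + i))

/-- The Gaussian binomial coefficient `C(m, k)_q = (q;q)_m / ((q;q)_k (q;q)_{m-k})`. -/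
noncomputable def gb (m k : ℕ) : PowerSeries ℚ := qp 1 m * (qp 1 k)⁻¹ * (qp 1 (m - k))⁻¹

namespace BU

open Finset

lemma qp_zero : qp 1 0 = 1 := by simp [qp]

lemma qp_one : qp 1 1 = 1 - X := by simp [qp]

lemma qp_succ (n : ℕ) : qp 1 (n + 1) = qp 1 n * (1 - X ^ (n + 1)) := by
  rw [qp, Finset.prod_range_succ, add_comm 1 n]; rfl

lemma qp_cc (n : ℕ) : constantCoeff (qp 1 n) = 1 := by
  induction n with
  | zero => simp [qp_zero]
  | succ m ih =>
    rw [qp_succ, map_mul, ih, one_mul]; simp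

lemma qp_ne (n : ℕ) : qp 1 n ≠ 0 := by
  intro h; have := qp_cc n; rw [h, map_zero] at this; exact zero_ne_one this

lemma osp_cc (m : ℕ) (hm : 1 ≤ m) : constantCoeff (1 - X ^ m : PowerSeries ℚ) = 1 := by
  obtain ⟨m', rfl⟩ : ∃ m', m = m' + 1 := ⟨m - 1, by omega⟩
  simp

lemma osp_ne (m : ℕ) (hm : 1 ≤ m) : (1 - X ^ m : PowerSeries ℚ) ≠ 0 := by
  intro h; have := osp_cc m hm; rw [h, map_zero] at this; exact zero_ne_one this

lemma inv_qp_mul (n : ℕ) : (qp 1 n)⁻¹ * qp 1 n = 1 :=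
  PowerSeries.inv_mul_cancel _ (by rw [qp_cc]; exact one_ne_zero)

lemma osp_mul_inv (m : ℕ) (hm : 1 ≤ m) : (1 - X ^ m : PowerSeries ℚ) * (1 - X ^ m)⁻¹ = 1 :=
  PowerSeries.mul_inv_cancel _ (by rw [osp_cc m hm]; exact one_ne_zero)

lemma one_inv : (1 : PowerSeries ℚ)⁻¹ = 1 := by
  have h : (1 : PowerSeries ℚ) * (1 : PowerSeries ℚ)⁻¹ = 1 :=
    PowerSeries.mul_inv_cancel _ (by simp)
  rwa [one_mul] at h

lemma gb_diag (m : ℕ) : gb m m = 1 := by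
  rw [gb, Nat.sub_self, qp_zero, one_inv, mul_one]
  exact PowerSeries.mul_inv_cancel _ (by rw [qp_cc]; exact one_ne_zero)

lemma gb_zero (m : ℕ) : gb m 0 = 1 := by
  rw [gb, qp_zero, one_inv, mul_one, Nat.sub_zero]
  exact PowerSeries.mul_inv_cancel _ (by rw [qp_cc]; exact one_ne_zero)



abbrev K := FractionRing (PowerSeries ℚ)

noncomputable def φ : PowerSeries ℚ →+* K := algebraMap (PowerSeries ℚ) K

lemma φ_inj : Function.Injective φ := IsFractionRing.injective _ _

lemma φ_ne {f : PowerSeries ℚ} (hf : f ≠ 0) : φ f ≠ 0 :=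
  (map_ne_zero_iff φ φ_inj).mpr hf

lemma φ_inv (f : PowerSeries ℚ) (hf : constantCoeff f ≠ 0) : φ f⁻¹ = (φ f)⁻¹ :=
  eq_inv_of_mul_eq_one_left (by rw [← map_mul, PowerSeries.inv_mul_cancel f hf, map_one])

lemma φ_inv_qp (n : ℕ) : φ (qp 1 n)⁻¹ = (φ (qp 1 n))⁻¹ :=
  φ_inv _ (by rw [qp_cc]; exact one_ne_zero)

lemma φ_inv_osp (m : ℕ) (hm : 1 ≤ m) : φ (1 - X ^ m : PowerSeries ℚ)⁻¹ = (φ (1 - X ^ m))⁻¹ :=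
  φ_inv _ (by rw [osp_cc m hm]; exact one_ne_zero)

-- Pascal: gb (k+j+1) (k+1) = gb (k+j) (k+1) + X^j * gb (k+j) k  for j ≥ 1
lemma gb_pascal (k j : ℕ) (hj : 1 ≤ j) :
    gb (k + j + 1) (k + 1) = gb (k + j) (k + 1) + X ^ j * gb (k + j) k := by
  obtain ⟨i, rfl⟩ : ∃ i, j = i + 1 := ⟨j - 1, by omega⟩
  apply φ_inj
  simp only [gb, show k + (i+1) + 1 - (k+1) = i+1 by omega, show k + (i+1) - (k+1) = i by omega,
    show k + (i+1) - k = i + 1 by omega, map_add, map_mul, φ_inv_qp, map_pow]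
  have hT : φ (qp 1 (k + (i+1) + 1)) = φ (qp 1 (k + i + 1)) * (1 - φ X ^ (k + i + 2)) := by
    rw [show k + (i+1) + 1 = (k + i + 1) + 1 by omega, qp_succ, map_mul, map_sub, map_one,
      map_pow, show k + i + 1 + 1 = k + i + 2 by omega]
  have hP : φ (qp 1 (k + (i+1))) = φ (qp 1 (k + i + 1)) := by rw [show k + (i+1) = k+i+1 by omega]
  have hA : φ (qp 1 (k + 1)) = φ (qp 1 k) * (1 - φ X ^ (k + 1)) := by
    rw [qp_succ, map_mul, map_sub, map_one, map_pow]
  have hB : φ (qp 1 (i + 1)) = φ (qp 1 i) * (1 - φ X ^ (i + 1)) := by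
    rw [qp_succ, map_mul, map_sub, map_one, map_pow]
  rw [hT, hP, hA, hB]
  have n1 : φ (qp 1 (k+i+1)) ≠ 0 := φ_ne (qp_ne _)
  have n2 : φ (qp 1 k) ≠ 0 := φ_ne (qp_ne _)
  have n3 : φ (qp 1 i) ≠ 0 := φ_ne (qp_ne _)
  have n4 : (1 - φ X ^ (k+1)) ≠ 0 := by
    rw [show (1 - φ X ^ (k+1)) = φ (1 - X ^ (k+1)) by rw [map_sub, map_one, map_pow]]
    exact φ_ne (osp_ne _ (by omega))
  have n5 : (1 - φ X ^ (i+1)) ≠ 0 := by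
    rw [show (1 - φ X ^ (i+1)) = φ (1 - X ^ (i+1)) by rw [map_sub, map_one, map_pow]]
    exact φ_ne (osp_ne _ (by omega))
  field_simp
  ring


lemma gb_last (k : ℕ) : gb (k+1) k = (1 - X ^ (k+1)) * (1 - X)⁻¹ := by
  apply φ_inj
  simp only [gb, show k + 1 - k = 1 by omega, map_mul, φ_inv_qp, qp_one,
    φ_inv_osp 1 (by norm_num), map_sub, map_one, map_pow, pow_one] at *
  have hT : φ (qp 1 (k+1)) = φ (qp 1 k) * (1 - φ X ^ (k + 1)) := by
    rw [qp_succ, map_mul, map_sub, map_one, map_pow]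
  rw [hT]
  have n2 : φ (qp 1 k) ≠ 0 := φ_ne (qp_ne _)
  have n4 : (1 - φ X) ≠ 0 := by
    rw [show (1 - φ X) = φ (1 - X) by rw [map_sub, map_one]]
    exact φ_ne (by have := osp_ne 1 le_rfl; rwa [pow_one] at this)
  field_simp

lemma v_id (M : ℕ) : (X : PowerSeries ℚ) * (qp 1 (M+2))⁻¹
    = X * (qp 1 (M+1))⁻¹ + X^(M+2) * (X * (qp 1 (M+2))⁻¹) := by
  apply φ_inj
  simp only [map_add, map_mul, map_pow, φ_inv_qp]
  have hT : φ (qp 1 (M+2)) = φ (qp 1 (M+1)) * (1 - φ X ^ (M + 2)) := by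
    rw [show M + 2 = (M+1) + 1 by omega, qp_succ, map_mul, map_sub, map_one, map_pow,
      show M + 1 + 1 = M + 2 by omega]
  rw [hT]
  have n1 : φ (qp 1 (M+1)) ≠ 0 := φ_ne (qp_ne _)
  have n4 : (1 - φ X ^ (M+2)) ≠ 0 := by
    rw [show (1 - φ X ^ (M+2)) = φ (1 - X ^ (M+2)) by rw [map_sub, map_one, map_pow]]
    exact φ_ne (osp_ne _ (by omega))
  field_simp
  ring



noncomputable def geom (m : ℕ) : PowerSeries ℚ := mk fun i => if m ∣ i then 1 else 0

lemma geom_mul (m : ℕ) (hm : 1 ≤ m) : geom m * (1 - X ^ m) = 1 := by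
  ext j
  simp only [mul_sub, mul_one, map_sub, coeff_mul_X_pow', geom, coeff_mk, coeff_one]
  by_cases hle : m ≤ j
  · have hiff : m ∣ j ↔ m ∣ j - m := by
      constructor
      · intro h; exact Nat.dvd_sub h dvd_rfl
      · intro h
        have h2 := Nat.dvd_add h (dvd_refl m)
        rwa [Nat.sub_add_cancel hle] at h2
    rw [if_pos hle, if_neg (by omega : ¬ j = 0), if_congr hiff rfl rfl, sub_self]
  · rw [if_neg hle]
    rcases Nat.eq_zero_or_pos j with rfl | hj
    · simp
    · have hnd : ¬ m ∣ j := fun h => hle (Nat.le_of_dvd hj h)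
      rw [if_neg hnd, if_neg (by omega : ¬ j = 0), sub_zero]

lemma geom_eq (m : ℕ) (hm : 1 ≤ m) : (1 - X ^ m : PowerSeries ℚ)⁻¹ = geom m := by
  calc (1 - X ^ m : PowerSeries ℚ)⁻¹ = (1 - X ^ m)⁻¹ * (geom m * (1 - X ^ m)) := by
        rw [geom_mul m hm, mul_one]
    _ = ((1 - X ^ m) * (1 - X ^ m)⁻¹) * geom m := by ring
    _ = geom m := by rw [osp_mul_inv m hm, one_mul]

lemma fin_geom (n : ℕ) : (1 - X ^ n : PowerSeries ℚ) * (1 - X)⁻¹ = ∑ r ∈ range n, X ^ r := by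
  have h2 : (∑ r ∈ range n, (X : PowerSeries ℚ) ^ r) * (1 - X) = 1 - X ^ n := by
    have h := geom_sum_mul (X : PowerSeries ℚ) n
    linear_combination -h
  calc (1 - X ^ n : PowerSeries ℚ) * (1 - X)⁻¹
      = ((∑ r ∈ range n, X ^ r) * (1 - X)) * (1-X)⁻¹ := by rw [h2]
    _ = (∑ r ∈ range n, X ^ r) * ((1 - X) * (1-X)⁻¹) := by ring
    _ = _ := by
        have := osp_mul_inv 1 le_rfl
        rw [pow_one] at this
        rw [this, mul_one]


noncomputable def trm (L t n : ℕ) : PowerSeries ℚ :=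
  (X ^ (n+t) - X ^ (2*(n+t)) * (1 - X ^ (n+t))⁻¹) * gb (L + n - 1) (n - 1)

noncomputable def S (L t N : ℕ) : ℚ := ∑ n ∈ Icc 1 N, coeff N (trm L t n)

lemma trm_coeff_zero (L t n j : ℕ) (h : j < n) : coeff j (trm L t n) = 0 := by
  have e : trm L t n
      = X ^ (n+t) * ((1 - X ^ (n+t) * (1 - X ^ (n+t))⁻¹) * gb (L + n - 1) (n - 1)) := by
    rw [trm, show 2*(n+t) = (n+t)+(n+t) by ring, pow_add]; ring
  rw [e, coeff_X_pow_mul', if_neg (by omega)]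

lemma trm_one (L L' t : ℕ) : trm L t 1 = trm L' t 1 := by
  rw [trm, trm, Nat.add_sub_cancel, Nat.add_sub_cancel]
  norm_num [gb_zero]

lemma gb_pascal' (M n : ℕ) (hn : 2 ≤ n) :
    gb (M+1+n-1) (n-1) = gb (M+n-1) (n-1) + X^(M+1) * gb (M+n-1) (n-2) := by
  have h := gb_pascal (n-2) (M+1) (by omega)
  rw [show n-2+(M+1)+1 = M+1+n-1 by omega, show n-2+1 = n-1 by omega,
    show n-2+(M+1) = M+n-1 by omega] at h
  exact h

lemma trm_step (M t n : ℕ) (hn : 2 ≤ n) :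
    trm (M+1) t n = trm M t n + X^(M+1) * trm (M+1) (t+1) (n-1) := by
  rw [trm, trm, trm, gb_pascal' M n hn, show (n-1)+(t+1) = n+t by omega,
    show M+1+(n-1)-1 = M+n-1 by omega, show (n-1)-1 = n-2 by omega]
  ring

lemma S_zero (L t : ℕ) : S L t 0 = 0 := by simp [S]

lemma S_rec (M t N : ℕ) : S (M+1) t N = S M t N + S (M+1) (t+1) (N - (M+1)) := by
  rcases Nat.eq_zero_or_pos N with rfl | hN
  · simp [S_zero]
  have hins : Icc 1 N = insert 1 (Icc 2 N) := by
    ext x; simp [mem_Icc, mem_insert]; omega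
  have hmap : Icc 2 N = (Icc 1 (N-1)).map (addRightEmbedding 1) := by
    rw [Finset.map_add_right_Icc]; congr 1; omega
  have hsplit : ∀ L' t', S L' t' N
      = coeff N (trm L' t' 1) + ∑ m ∈ Icc 1 (N-1), coeff N (trm L' t' (m+1)) := by
    intro L' t'
    rw [S, hins, Finset.sum_insert (by simp), hmap, Finset.sum_map]
    rfl
  rw [hsplit, hsplit]
  have hterm : ∀ m ∈ Icc 1 (N-1), coeff N (trm (M+1) t (m+1))
      = coeff N (trm M t (m+1)) + coeff N (X^(M+1) * trm (M+1) (t+1) m) := by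
    intro m hm
    rw [trm_step M t (m+1) (by simp at hm; omega), map_add, Nat.add_sub_cancel]
  rw [Finset.sum_congr rfl hterm, Finset.sum_add_distrib, trm_one (M+1) M t]
  have htail : ∑ m ∈ Icc 1 (N-1), coeff N (X^(M+1) * trm (M+1) (t+1) m)
      = S (M+1) (t+1) (N - (M+1)) := by
    by_cases hMN : M + 1 ≤ N
    · have hterm2 : ∀ m ∈ Icc 1 (N-1), coeff N (X^(M+1) * trm (M+1) (t+1) m)
          = coeff (N - (M+1)) (trm (M+1) (t+1) m) := by
        intro m _
        rw [coeff_X_pow_mul', if_pos hMN]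
      rw [Finset.sum_congr rfl hterm2, S]
      apply (Finset.sum_subset (Finset.Icc_subset_Icc_right (by omega)) _).symm
      intro m hm1 hm2
      simp only [mem_Icc] at hm1 hm2
      exact trm_coeff_zero _ _ _ _ (by omega)
    · rw [show N - (M+1) = 0 by omega, S_zero]
      apply Finset.sum_eq_zero
      intro m _
      rw [coeff_X_pow_mul', if_neg hMN]
  rw [htail]
  ring


lemma trm_one_coeff (t N n : ℕ) (hn : 1 ≤ n) :
    coeff N (trm 1 t n)
      = (∑ r ∈ range n, if N = (n+t)+r then (1:ℚ) else 0)
        - (∑ r ∈ range n, if 2*(n+t)+r ≤ N then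
            (if (n+t) ∣ (N - (2*(n+t)+r)) then (1:ℚ) else 0) else 0) := by
  have hgb : gb (1+n-1) (n-1) = (1 - X^n) * (1-X)⁻¹ := by
    have h := gb_last (n-1)
    rw [show n-1+1 = n by omega] at h
    rw [show 1+n-1 = n by omega]
    exact h
  have e : trm 1 t n = ∑ r ∈ range n, (X^((n+t)+r) - X^(2*(n+t)+r) * geom (n+t)) := by
    rw [trm, hgb, geom_eq (n+t) (by omega), fin_geom, Finset.mul_sum]
    refine Finset.sum_congr rfl fun r _ => ?_
    rw [pow_add, pow_add]; ring
  rw [e, map_sum]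
  have hsub : ∀ x ∈ range n, coeff N (X^((n+t)+x) - X^(2*(n+t)+x) * geom (n+t))
      = coeff N (X^((n+t)+x)) - coeff N (X^(2*(n+t)+x) * geom (n+t)) :=
    fun x _ => map_sub _ _ _
  rw [Finset.sum_congr rfl hsub, Finset.sum_sub_distrib]
  congr 1
  · exact Finset.sum_congr rfl fun r _ => by rw [coeff_X_pow]
  · refine Finset.sum_congr rfl fun r _ => ?_
    rw [coeff_X_pow_mul', geom, coeff_mk]

lemma sumA (t N n : ℕ) :
    (∑ r ∈ range n, if N = (n+t)+r then (1:ℚ) else 0)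
      = if (n+t ≤ N ∧ N < (n+t)+n) then 1 else 0 := by
  rw [Finset.sum_boole]
  by_cases h : n+t ≤ N ∧ N < (n+t)+n
  · rw [if_pos h]
    have e : (range n).filter (fun r => N = (n+t)+r) = {N - (n+t)} := by
      ext r; simp only [Finset.mem_filter, Finset.mem_range, Finset.mem_singleton]; omega
    rw [e]; simp
  · rw [if_neg h]
    have e : (range n).filter (fun r => N = (n+t)+r) = ∅ := by
      ext r; simp only [Finset.mem_filter, Finset.mem_range, Finset.notMem_empty, iff_false,
        not_and]; omega
    rw [e]; simp

lemma sumB (t N n : ℕ) (hn : 1 ≤ n) :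
    (∑ r ∈ range n, if 2*(n+t)+r ≤ N then
        (if (n+t) ∣ (N - (2*(n+t)+r)) then (1:ℚ) else 0) else 0)
      ≤ if 2*(n+t) ≤ N then 1 else 0 := by
  by_cases h : 2*(n+t) ≤ N
  · rw [if_pos h]
    have e : ∀ r ∈ range n, (if 2*(n+t)+r ≤ N then
        (if (n+t) ∣ (N - (2*(n+t)+r)) then (1:ℚ) else 0) else 0)
        = if (2*(n+t)+r ≤ N ∧ (n+t) ∣ (N - (2*(n+t)+r))) then 1 else 0 := by
      intro r _
      by_cases h1 : 2*(n+t)+r ≤ N <;> by_cases h2 : (n+t) ∣ (N - (2*(n+t)+r)) <;>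
        simp [h1, h2]
    rw [Finset.sum_congr rfl e, Finset.sum_boole]
    have hcard : ((range n).filter
        (fun r => 2*(n+t)+r ≤ N ∧ (n+t) ∣ (N - (2*(n+t)+r)))).card ≤ 1 := by
      apply Finset.card_le_one.mpr
      intro a ha b hb
      simp only [Finset.mem_filter, Finset.mem_range] at ha hb
      obtain ⟨har, hale, c, hc⟩ := ha
      obtain ⟨hbr, hble, d, hd⟩ := hb
      have ha' : N = (n+t)*c + (2*(n+t)+a) := (Nat.sub_eq_iff_eq_add hale).mp hc
      have hb' : N = (n+t)*d + (2*(n+t)+b) := (Nat.sub_eq_iff_eq_add hble).mp hd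
      have ha3 : N = a + (n+t) * (c+2) := by rw [ha']; ring
      have hb3 : N = b + (n+t) * (d+2) := by rw [hb']; ring
      calc a = a % (n+t) := (Nat.mod_eq_of_lt (by omega)).symm
        _ = (a + (n+t)*(c+2)) % (n+t) := (Nat.add_mul_mod_self_left a (n+t) (c+2)).symm
        _ = (b + (n+t)*(d+2)) % (n+t) := by rw [← ha3, hb3]
        _ = b % (n+t) := Nat.add_mul_mod_self_left b (n+t) (d+2)
        _ = b := Nat.mod_eq_of_lt (by omega)
    exact_mod_cast hcard
  · rw [if_neg h]
    apply le_of_eq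
    apply Finset.sum_eq_zero
    intro r _
    rw [if_neg (by omega)]

lemma S_base (t N : ℕ) : 0 ≤ S 1 t N := by
  have hS : S 1 t N
      = (∑ n ∈ Icc 1 N, ∑ r ∈ range n, if N = (n+t)+r then (1:ℚ) else 0)
        - (∑ n ∈ Icc 1 N, ∑ r ∈ range n, if 2*(n+t)+r ≤ N then
            (if (n+t) ∣ (N - (2*(n+t)+r)) then (1:ℚ) else 0) else 0) := by
    rw [S, Finset.sum_congr rfl
      (fun n hn => trm_one_coeff t N n (by simp only [mem_Icc] at hn; omega)),
      Finset.sum_sub_distrib]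
  have hA : (∑ n ∈ Icc 1 N, ∑ r ∈ range n, if N = (n+t)+r then (1:ℚ) else 0)
      = (((N-t) - (N-t)/2 : ℕ) : ℚ) := by
    rw [Finset.sum_congr rfl (fun n _ => sumA t N n), Finset.sum_boole]
    have e : (Icc 1 N).filter (fun n => n+t ≤ N ∧ N < (n+t)+n)
        = Icc ((N-t)/2 + 1) (N-t) := by
      ext x; simp only [Finset.mem_filter, mem_Icc]; omega
    rw [e, Nat.card_Icc, show (N-t) + 1 - ((N-t)/2 + 1) = (N-t) - (N-t)/2 by omega]
  have hB : (∑ n ∈ Icc 1 N, ∑ r ∈ range n, if 2*(n+t)+r ≤ N then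
        (if (n+t) ∣ (N - (2*(n+t)+r)) then (1:ℚ) else 0) else 0)
      ≤ ((N/2 - t : ℕ) : ℚ) := by
    calc _ ≤ ∑ n ∈ Icc 1 N, if 2*(n+t) ≤ N then (1:ℚ) else 0 :=
          Finset.sum_le_sum (fun n hn => sumB t N n (by simp only [mem_Icc] at hn; omega))
      _ = (((Icc 1 N).filter (fun n => 2*(n+t) ≤ N)).card : ℚ) := by
          rw [Finset.sum_boole]
      _ ≤ _ := by
          have e : (Icc 1 N).filter (fun n => 2*(n+t) ≤ N) = Icc 1 (N/2 - t) := by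
            ext x; simp only [Finset.mem_filter, mem_Icc]; omega
          rw [e, Nat.card_Icc, show N/2 - t + 1 - 1 = N/2 - t by omega]
  have harith : ((N/2 - t : ℕ) : ℚ) ≤ (((N-t) - (N-t)/2 : ℕ) : ℚ) := by
    exact_mod_cast (by omega : N/2 - t ≤ (N-t) - (N-t)/2)
  rw [hS, hA]
  linarith


lemma coeff0_X_mul (f : PowerSeries ℚ) : coeff 0 (X * f) = 0 := by
  rw [coeff_zero_eq_constantCoeff, map_mul, constantCoeff_X, zero_mul]

lemma qbinom (L : ℕ) : ∀ N, coeff N ((X : PowerSeries ℚ) * (qp 1 (L+1))⁻¹)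
    = ∑ n ∈ Icc 1 N, coeff N ((X : PowerSeries ℚ)^n * gb (L+n-1) (n-1)) := by
  induction L with
  | zero =>
    intro N
    rcases Nat.eq_zero_or_pos N with rfl | hN
    · rw [coeff0_X_mul]; simp
    · have hL : coeff N ((X : PowerSeries ℚ) * (qp 1 (0+1))⁻¹) = 1 := by
        rw [show (0+1 : ℕ) = 1 from rfl, qp_one,
          show (1 - X : PowerSeries ℚ) = 1 - X^1 by rw [pow_one],
          geom_eq 1 le_rfl, show (X : PowerSeries ℚ) = X^1 by rw [pow_one],
          coeff_X_pow_mul', if_pos (show 1 ≤ N by omega), geom, coeff_mk, if_pos (one_dvd _)]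
      rw [hL]
      have e : ∀ n ∈ Icc 1 N, coeff N ((X : PowerSeries ℚ)^n * gb (0+n-1) (n-1))
          = if N = n then (1:ℚ) else 0 := by
        intro n hn
        rw [show 0+n-1 = n-1 by omega, gb_diag, mul_one, coeff_X_pow]
      rw [Finset.sum_congr rfl e, Finset.sum_boole]
      have e2 : (Icc 1 N).filter (fun n => N = n) = {N} := by
        ext x; simp only [Finset.mem_filter, mem_Icc, Finset.mem_singleton]; omega
      rw [e2]; simp
  | succ M ih =>
    intro N
    induction N using Nat.strong_induction_on with
    | _ N ihN =>
    rcases Nat.eq_zero_or_pos N with rfl | hN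
    · rw [coeff0_X_mul]; simp
    · have hL : coeff N ((X : PowerSeries ℚ) * (qp 1 (M+1+1))⁻¹)
          = coeff N ((X : PowerSeries ℚ) * (qp 1 (M+1))⁻¹)
            + coeff (N - (M+2)) ((X : PowerSeries ℚ) * (qp 1 (M+2))⁻¹) := by
        rw [show M+1+1 = M+2 by omega]
        conv_lhs => rw [v_id M]
        rw [map_add, coeff_X_pow_mul']
        by_cases h : M+2 ≤ N
        · rw [if_pos h]
        · rw [if_neg h, show N - (M+2) = 0 by omega, coeff0_X_mul]
      -- split and reindex the sum
      have hins : Icc 1 N = insert 1 (Icc 2 N) := by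
        ext x; simp only [mem_Icc, Finset.mem_insert]; omega
      have hmap : Icc 2 N = (Icc 1 (N-1)).map (addRightEmbedding 1) := by
        rw [Finset.map_add_right_Icc]; congr 1; omega
      have hsplit : ∀ L', ∑ n ∈ Icc 1 N, coeff N ((X : PowerSeries ℚ)^n * gb (L'+n-1) (n-1))
          = coeff N ((X : PowerSeries ℚ)^1 * gb (L'+1-1) 0)
            + ∑ m ∈ Icc 1 (N-1), coeff N ((X : PowerSeries ℚ)^(m+1) * gb (L'+(m+1)-1) m) := by
        intro L'
        rw [hins, Finset.sum_insert (by simp), hmap, Finset.sum_map]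
        rfl
      rw [hsplit]
      have hpow : ∀ m : ℕ, (X : PowerSeries ℚ)^(m+1) * (X^(M+1) * gb (M+m) (m-1))
          = X^(M+2) * (X^m * gb (M+m) (m-1)) := by
        intro m
        rw [← mul_assoc, ← mul_assoc, ← pow_add, ← pow_add,
          show m+1+(M+1) = M+2+m by omega]
      have hterm : ∀ m ∈ Icc 1 (N-1),
          coeff N ((X : PowerSeries ℚ)^(m+1) * gb (M+1+(m+1)-1) m)
          = coeff N ((X : PowerSeries ℚ)^(m+1) * gb (M+(m+1)-1) m)
            + coeff N ((X : PowerSeries ℚ)^(M+2) * (X^m * gb (M+m) (m-1))) := by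
        intro m hm
        have hp := gb_pascal' M (m+1) (by simp only [mem_Icc] at hm; omega)
        rw [show m+1-1 = m by omega, show m+1-2 = m-1 by omega] at hp
        rw [hp, mul_add, map_add, ← hpow m, show M+(m+1)-1 = M+m by omega]
      rw [Finset.sum_congr rfl hterm, Finset.sum_add_distrib, hL]
      -- first part matches ih N split
      have hA : coeff N ((X : PowerSeries ℚ) * (qp 1 (M+1))⁻¹)
          = coeff N ((X : PowerSeries ℚ)^1 * gb (M+1+1-1) 0)
            + ∑ m ∈ Icc 1 (N-1), coeff N ((X : PowerSeries ℚ)^(m+1) * gb (M+(m+1)-1) m) := by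
        rw [ih N, hsplit M, gb_zero, gb_zero]
      -- second part equals the shifted full sum
      have hB : ∑ m ∈ Icc 1 (N-1), coeff N ((X : PowerSeries ℚ)^(M+2) * (X^m * gb (M+m) (m-1)))
          = coeff (N - (M+2)) ((X : PowerSeries ℚ) * (qp 1 (M+2))⁻¹) := by
        by_cases h : M+2 ≤ N
        · have e1 : ∀ m ∈ Icc 1 (N-1),
              coeff N ((X : PowerSeries ℚ)^(M+2) * (X^m * gb (M+m) (m-1)))
              = coeff (N-(M+2)) ((X : PowerSeries ℚ)^m * gb (M+1+m-1) (m-1)) := by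
            intro m _
            rw [coeff_X_pow_mul', if_pos h, show M+1+m-1 = M+m by omega]
          rw [Finset.sum_congr rfl e1]
          have e2 : ∑ m ∈ Icc 1 (N-1), coeff (N-(M+2)) ((X : PowerSeries ℚ)^m * gb (M+1+m-1) (m-1))
              = ∑ m ∈ Icc 1 (N-(M+2)), coeff (N-(M+2)) ((X : PowerSeries ℚ)^m * gb (M+1+m-1) (m-1)) := by
            apply (Finset.sum_subset (Finset.Icc_subset_Icc_right (by omega)) _).symm
            intro m hm1 hm2
            simp only [mem_Icc] at hm1 hm2
            rw [coeff_X_pow_mul', if_neg (by omega)]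
          rw [e2, ← ihN (N-(M+2)) (by omega), show M+1+1 = M+2 by omega]
        · rw [show N - (M+2) = 0 by omega, coeff0_X_mul]
          apply Finset.sum_eq_zero
          intro m _
          rw [coeff_X_pow_mul', if_neg h]
      rw [hB, hA]
      ring


lemma S_nonneg : ∀ L, 1 ≤ L → ∀ t N, 0 ≤ S L t N := by
  intro L
  induction L with
  | zero => intro h; omega
  | succ M ih =>
    intro _ t N
    rcases Nat.eq_zero_or_pos M with rfl | hM
    · exact S_base t N
    · induction N using Nat.strong_induction_on generalizing t with
      | _ N ihN =>
      rcases Nat.eq_zero_or_pos N with rfl | hN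
      · rw [S_zero]
      · rw [S_rec]
        have h1 := ih hM t N
        have h2 := ihN (N - (M+1)) (by omega) (t+1)
        linarith


end BU

/-- **Theorem 5.1.** For `L ≥ 1`, the series
`G_{L,1}(q) = q/(q;q)_{L+1} - Σ_{n ≥ 1} (q^{2n}/(1-q^n)) C(L+n-1, n-1)_q`
has non-negative coefficients. Coefficient-wise, with the sum truncated exactly at `n ≤ N`. -/
theorem stmt14 (L : ℕ) (hL : 1 ≤ L) (N : ℕ) :
    0 ≤ coeff N ((X : PowerSeries ℚ) * (qp 1 (L + 1))⁻¹)
        - ∑ n ∈ Finset.Icc 1 N,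
            coeff N ((X : PowerSeries ℚ) ^ (2 * n) * (1 - X ^ n)⁻¹ * gb (L + n - 1) (n - 1)) := by
  rw [BU.qbinom L N, ← Finset.sum_sub_distrib]
  have e : ∀ n ∈ Finset.Icc 1 N,
      coeff N ((X : PowerSeries ℚ)^n * gb (L+n-1) (n-1))
        - coeff N ((X : PowerSeries ℚ) ^ (2 * n) * (1 - X ^ n)⁻¹ * gb (L + n - 1) (n - 1))
      = coeff N (BU.trm L 0 n) := by
    intro n _
    rw [BU.trm, Nat.add_zero, sub_mul, map_sub, mul_assoc]
  rw [Finset.sum_congr rfl e]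
  exact BU.S_nonneg L hL 0 N
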